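/- If a solution set P is sufficient (contains, for every λ in the unit simplex of R^k, a solution minimizing the scalarized objective λ·f) for a k-objective minimization problem with non-negative objective values, then P k-approximates every feasible solution: for every feasible z there exists x ∈ P with f_i(x) ≤ k · f_i(z) for all i = 1,...,k, provided f_i(z) > 0 for all i. -/

import Mathlib

/-- A sufficient solution set `P` (containing, for every trade-off `λ` in the
unit simplex, a minimizer of the scalarized objective `λ·f` over `S`) `k`-approximates
every feasible solution whose objective values are all positive. -/
theorem sufficient_set_k_approximates
    {α : Type*} (k : ℕ) (hk : 1 ≤ k)
    (S : Finset α) (hS : S.Nonempty)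
    (f : α → Fin k → ℝ)
    (hf : ∀ x ∈ S, ∀ i, 0 ≤ f x i)
    (P : Finset α) (hPS : P ⊆ S)
    (hsuff : ∀ lam : Fin k → ℝ, (∀ i, 0 ≤ lam i) → (∑ i, lam i) = 1 →
      ∃ x ∈ P, ∀ y ∈ S, (∑ i, lam i * f x i) ≤ ∑ i, lam i * f y i)
    (z : α) (hz : z ∈ S) (hzpos : ∀ i, 0 < f z i) :
    ∃ x ∈ P, ∀ i, f x i ≤ (k : ℝ) * f z i := by
  set c : ℝ := ∑ j, (f z j)⁻¹ with hc
  have hcpos : 0 < c := by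
    apply Finset.sum_pos
    · intro j _
      exact inv_pos.mpr (hzpos j)
    · simp [Finset.univ_nonempty_iff]
      exact Fin.pos_iff_nonempty.mp hk
  set lam : Fin k → ℝ := fun i => (f z i)⁻¹ / c with hlam
  have hlam0 : ∀ i, 0 ≤ lam i := fun i =>
    div_nonneg (inv_nonneg.mpr (hzpos i).le) hcpos.le
  have hlam1 : (∑ i, lam i) = 1 := by
    simp only [hlam]
    rw [← Finset.sum_div, ← hc, div_self hcpos.ne']
  obtain ⟨x, hxP, hxmin⟩ := hsuff lam hlam0 hlam1
  refine ⟨x, hxP, fun i => ?_⟩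
  have hsumz : (∑ j, lam j * f z j) = (k : ℝ) / c := by
    have : ∀ j, lam j * f z j = 1 / c := by
      intro j
      simp only [hlam]
      field_simp [hlam, (hzpos j).ne', hcpos.ne']
    simp [this, Finset.sum_const, Finset.card_univ]
    ring
  have hterm : lam i * f x i ≤ ∑ j, lam j * f x j := by
    apply Finset.single_le_sum (f := fun j => lam j * f x j)
    · intro j _
      exact mul_nonneg (hlam0 j) (hf x (hPS hxP) j)
    · exact Finset.mem_univ i
  have h1 : lam i * f x i ≤ (k : ℝ) / c := by
    calc lam i * f x i ≤ ∑ j, lam j * f x j := hterm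
      _ ≤ ∑ j, lam j * f z j := hxmin z hz
      _ = (k : ℝ) / c := hsumz
  have : (f z i)⁻¹ / c * f x i ≤ (k : ℝ) / c := h1
  rw [div_mul_eq_mul_div, div_le_div_iff₀ hcpos hcpos] at this
  have h2 : (f z i)⁻¹ * f x i ≤ (k:ℝ) := by nlinarith
  calc f x i = f z i * ((f z i)⁻¹ * f x i) := by
        field_simp [(hzpos i).ne']
    _ ≤ f z i * k := by
        apply mul_le_mul_of_nonneg_left _ (hzpos i).le
        linarith [h2]
    _ = (k : ℝ) * f z i := mul_comm _ _
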